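/- arXiv:1610.09467 — 3 statements merged into one kernel-verified Lean document; each statement's English description precedes it below -/
import Mathlib

section
/- Let p be a prime and let a be a nonzero element of F_p. The number of matrices g in GL_2(F_p) with trace equal to a is exactly p(p^2 - p - 1). -/
open Matrix Finset
lemma pairCount (p : ℕ) [Fact p.Prime] (c : ZMod p) :
    (Finset.univ.filter (fun yz : ZMod p × ZMod p => yz.1 * yz.2 = c)).card
      = if c = 0 then 2 * p - 1 else p - 1 := by
  split_ifs with hc
  · subst hc
    have h : Finset.univ.filter (fun yz : ZMod p × ZMod p => yz.1 * yz.2 = 0)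
        = ({0} ×ˢ Finset.univ) ∪ (Finset.univ ×ˢ {0}) := by
      ext ⟨y, z⟩
      simp [mul_eq_zero, eq_comm]
    have h2 : (({0} ×ˢ (Finset.univ : Finset (ZMod p))) ∩ ((Finset.univ : Finset (ZMod p)) ×ˢ {0}))
        = ({0} : Finset (ZMod p)) ×ˢ ({0} : Finset (ZMod p)) := by
      ext ⟨y, z⟩; simp [Prod.ext_iff, eq_comm]
    have h3 := Finset.card_union_add_card_inter ({0} ×ˢ (Finset.univ : Finset (ZMod p)))
      ((Finset.univ : Finset (ZMod p)) ×ˢ {0})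
    rw [h2] at h3
    rw [h]
    simp only [Finset.card_product, Finset.card_singleton, ZMod.card, one_mul, mul_one,
      Finset.card_univ] at h3 ⊢
    have hp2 := (Fact.out : p.Prime).two_le
    omega
  · rw [Finset.card_nbij' (fun yz : ZMod p × ZMod p => yz.1)
      (fun y : ZMod p => (y, c / y)) (t := Finset.univ.filter (fun y : ZMod p => y ≠ 0))
      ?_ ?_ ?_ ?_]
    · rw [Finset.filter_ne', Finset.card_erase_of_mem (Finset.mem_univ _)]
      simp [ZMod.card]
    · rintro ⟨y, z⟩ h
      simp only [Finset.mem_coe, Finset.mem_filter, Finset.mem_univ, true_and] at h ⊢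
      rintro rfl; rw [zero_mul] at h; exact hc h.symm
    · intro y hy
      simp only [Finset.mem_coe, Finset.mem_filter, Finset.mem_univ, true_and] at hy ⊢
      field_simp
    · rintro ⟨y, z⟩ h
      simp only [Finset.mem_coe, Finset.mem_filter, Finset.mem_univ, true_and] at h
      have hy : y ≠ 0 := by rintro rfl; rw [zero_mul] at h; exact hc h.symm
      have : c / y = z := by field_simp; rw [h]
      simp [this]
    · intro y hy; rfl

lemma tripleCount (p : ℕ) [Fact p.Prime] (a : ZMod p) (ha : a ≠ 0) :
    (Finset.univ.filter (fun v : ZMod p × ZMod p × ZMod p =>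
      v.1 * (a - v.1) = v.2.1 * v.2.2)).card = p ^ 2 + p := by
  have hp2 := (Fact.out : p.Prime).two_le
  rw [Finset.card_eq_sum_card_fiberwise (f := fun v : ZMod p × ZMod p × ZMod p => v.1)
    (t := Finset.univ) (fun v _ => Finset.mem_univ _)]
  have hfib : ∀ x : ZMod p,
      ((Finset.univ.filter (fun v : ZMod p × ZMod p × ZMod p =>
        v.1 * (a - v.1) = v.2.1 * v.2.2)).filter (fun v => v.1 = x)).card
      = if x * (a - x) = 0 then 2 * p - 1 else p - 1 := by
    intro x
    rw [← pairCount p (x * (a - x))]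
    apply Finset.card_nbij' (fun v : ZMod p × ZMod p × ZMod p => v.2)
      (fun yz : ZMod p × ZMod p => (x, yz))
    · rintro ⟨u, y, z⟩ h
      simp only [Finset.mem_coe, Finset.mem_filter, Finset.mem_univ, true_and] at h ⊢
      obtain ⟨h1, rfl⟩ := h
      exact h1.symm
    · rintro ⟨y, z⟩ h
      simp only [Finset.mem_coe, Finset.mem_filter, Finset.mem_univ, true_and] at h ⊢
      exact ⟨h.symm, trivial⟩
    · rintro ⟨u, y, z⟩ h
      simp only [Finset.mem_coe, Finset.mem_filter, Finset.mem_univ, true_and] at h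
      simp [h.2]
    · rintro ⟨y, z⟩ h; rfl
  simp only [hfib]
  have hcond : ∀ x : ZMod p, (x * (a - x) = 0) ↔ (x = 0 ∨ x = a) := by
    intro x
    rw [mul_eq_zero, sub_eq_zero]
    tauto
  simp only [hcond]
  rw [Finset.sum_ite, Finset.sum_const, Finset.sum_const]
  have h1 : (Finset.univ.filter (fun x : ZMod p => x = 0 ∨ x = a)) = {0, a} := by
    ext x; simp
  have h2 : ({0, a} : Finset (ZMod p)).card = 2 := by
    rw [Finset.card_insert_of_notMem (by simpa using ha.symm), Finset.card_singleton]
  have h3 : (Finset.univ.filter (fun x : ZMod p => ¬(x = 0 ∨ x = a))).card = p - 2 := by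
    have := Finset.card_filter_add_card_filter_not
      (s := (Finset.univ : Finset (ZMod p))) (p := fun x => x = 0 ∨ x = a)
    rw [h1, h2] at this
    simp only [Finset.card_univ, ZMod.card] at this
    omega
  rw [h1, h2, h3]
  simp only [smul_eq_mul]
  obtain ⟨q, rfl⟩ : ∃ q, p = q + 2 := ⟨p - 2, by omega⟩
  have e1 : 2 * (q + 2) - 1 = 2 * q + 3 := by omega
  have e2 : (q + 2) - 2 = q := by omega
  have e3 : (q + 2) - 1 = q + 1 := by omega
  rw [e1, e2, e3]
  ring

theorem stmt_1 (p : ℕ) (hp : p.Prime) (a : ZMod p) (ha : a ≠ 0) :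
    Nat.card {g : GL (Fin 2) (ZMod p) // Matrix.trace (g : Matrix (Fin 2) (Fin 2) (ZMod p)) = a}
      = p * (p ^ 2 - p - 1) := by
  haveI := Fact.mk hp
  have hK : True := trivial
  -- Step 1: equiv with nondegenerate matrices of trace a
  have E1 : {g : GL (Fin 2) (ZMod p) // Matrix.trace (g : Matrix (Fin 2) (Fin 2) (ZMod p)) = a}
      ≃ {M : Matrix (Fin 2) (Fin 2) (ZMod p) // M.det ≠ 0 ∧ Matrix.trace M = a} :=
    { toFun := fun g => ⟨(g.1 : Matrix (Fin 2) (Fin 2) (ZMod p)),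
        ⟨by
          have : IsUnit ((g.1 : Matrix (Fin 2) (Fin 2) (ZMod p))).det :=
            (Matrix.isUnit_iff_isUnit_det _).mp g.1.isUnit
          exact this.ne_zero, g.2⟩⟩
      invFun := fun M => ⟨((Matrix.isUnit_iff_isUnit_det M.1).mpr M.2.1.isUnit).unit, by
        simp only [IsUnit.unit_spec]; exact M.2.2⟩
      left_inv := fun g => by
        ext1
        exact Units.ext (IsUnit.unit_spec _)
      right_inv := fun M => by
        ext1
        simp }
  have E2 : {M : Matrix (Fin 2) (Fin 2) (ZMod p) // M.det ≠ 0 ∧ Matrix.trace M = a}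
      ≃ {v : (ZMod p) × (ZMod p) × (ZMod p) // v.1 * (a - v.1) - v.2.1 * v.2.2 ≠ 0} :=
    { toFun := fun M => ⟨(M.1 0 0, M.1 0 1, M.1 1 0), by
        have htr : M.1 1 1 = a - M.1 0 0 := by
          have := M.2.2
          rw [Matrix.trace_fin_two] at this
          linear_combination this
        have hdet := M.2.1
        rw [Matrix.det_fin_two, htr] at hdet
        simpa using hdet⟩
      invFun := fun v => ⟨!![v.1.1, v.1.2.1; v.1.2.2, a - v.1.1], by
        constructor
        · rw [Matrix.det_fin_two_of]
          simpa using v.2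
        · rw [Matrix.trace_fin_two_of]
          ring⟩
      left_inv := fun M => by
        ext i j
        have htr : M.1 1 1 = a - M.1 0 0 := by
          have := M.2.2
          rw [Matrix.trace_fin_two] at this
          linear_combination this
        fin_cases i <;> fin_cases j <;> simp [htr]
      right_inv := fun v => by
        ext <;> simp }
  rw [Nat.card_congr (E1.trans E2), Nat.card_eq_fintype_card, Fintype.card_subtype]
  have hcompl := Finset.card_filter_add_card_filter_not
    (s := (Finset.univ : Finset ((ZMod p) × (ZMod p) × (ZMod p))))
    (p := fun v => v.1 * (a - v.1) = v.2.1 * v.2.2)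
  rw [tripleCount p a ha] at hcompl
  have huniv : (Finset.univ : Finset ((ZMod p) × (ZMod p) × (ZMod p))).card = p ^ 3 := by
    simp [Finset.card_univ, ZMod.card]
    ring
  rw [huniv] at hcompl
  have hfe : (Finset.univ.filter
        (fun v : (ZMod p) × (ZMod p) × (ZMod p) => v.1 * (a - v.1) - v.2.1 * v.2.2 ≠ 0)).card
      = (Finset.univ.filter
        (fun v : (ZMod p) × (ZMod p) × (ZMod p) => ¬(v.1 * (a - v.1) = v.2.1 * v.2.2))).card := by
    apply Finset.card_bij (fun v _ => v) <;> intros <;>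
      simp_all [sub_ne_zero]
  rw [hfe]
  have hp2 := hp.two_le
  have hple : p ^ 2 + p ≤ p ^ 3 := by nlinarith
  obtain ⟨q, rfl⟩ : ∃ q, p = q + 2 := ⟨p - 2, by omega⟩
  have : ((q+2) ^ 2 - (q+2) - 1) = q^2 + 3*q + 1 := by
    have : (q+2)^2 = q^2 + 4*q + 4 := by ring
    omega
  rw [this]
  have h3 : (q+2)^3 = q^3 + 6*q^2+12*q+8 := by ring
  have h2 : (q+2)^2 = q^2+4*q+4 := by ring
  rw [h3, h2] at hcompl
  have : (q+2) * (q^2+3*q+1) = q^3+5*q^2+7*q+2 := by ring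
  omega
end

section
/- Let C = ∏_{p prime} (1 - 3·p^{-2} + 2·p^{-3}), a positive real number. Then as X tends to infinity (over the reals), the sum ∑ 2^{ω(N)}, taken over squarefree integers N with X ≤ N ≤ 2X, is asymptotic to C · X · log X; that is, the ratio of the sum to X·log X tends to C. -/
open Filter

section Aux

noncomputable def cc : ℕ → ℝ := fun e =>
  if e = 0 then 1 else if e = 2 then -3 else if e = 3 then 2 else 0

noncomputable def gg : ArithmeticFunction ℝ :=
  ⟨fun n => if n = 0 then 0 else ∏ p ∈ n.primeFactors, cc (n.factorization p), by simp⟩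

open Finset Real ArithmeticFunction Topology
open scoped ArithmeticFunction.sigma

lemma gg_apply {n : ℕ} (hn : n ≠ 0) :
    gg n = ∏ p ∈ n.primeFactors, cc (n.factorization p) := by
  simp [gg, hn]

lemma gg_mult : gg.IsMultiplicative := by
  constructor
  · rw [gg_apply one_ne_zero]; simp [cc]
  · intro m n hmn
    rcases eq_or_ne m 0 with rfl | hm
    · rw [Nat.coprime_zero_left] at hmn
      subst hmn; simp [gg]
    rcases eq_or_ne n 0 with rfl | hn
    · rw [Nat.coprime_zero_right] at hmn
      subst hmn; simp [gg]
    rw [gg_apply (Nat.mul_ne_zero hm hn), gg_apply hm, gg_apply hn,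
      Nat.primeFactors_mul hm hn, Finset.prod_union hmn.disjoint_primeFactors]
    congr 1
    · refine Finset.prod_congr rfl fun p hp => ?_
      have h0 : n.factorization p = 0 := by
        rw [← Finsupp.notMem_support_iff, Nat.support_factorization]
        exact Finset.disjoint_left.mp hmn.disjoint_primeFactors hp
      rw [Nat.factorization_mul hm hn, Finsupp.add_apply, h0, add_zero]
    · refine Finset.prod_congr rfl fun p hp => ?_
      have h0 : m.factorization p = 0 := by
        rw [← Finsupp.notMem_support_iff, Nat.support_factorization]
        exact Finset.disjoint_right.mp hmn.disjoint_primeFactors hp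
      rw [Nat.factorization_mul hm hn, Finsupp.add_apply, h0, zero_add]

lemma gg_prime_pow {p : ℕ} (hp : p.Prime) {k : ℕ} (hk : k ≠ 0) : gg (p ^ k) = cc k := by
  rw [gg_apply (pow_ne_zero _ hp.pos.ne')]
  rw [Nat.primeFactors_prime_pow hk hp, Finset.prod_singleton, hp.factorization_pow,
    Finsupp.single_eq_same]

noncomputable def FF : ArithmeticFunction ℝ :=
  ⟨fun n => if Squarefree n then 2 ^ n.primeFactors.card else 0, by
    simp [not_squarefree_zero]⟩

lemma FF_apply (n : ℕ) : FF n = if Squarefree n then 2 ^ n.primeFactors.card else 0 := rfl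

lemma FF_mult : FF.IsMultiplicative := by
  constructor
  · simp [FF_apply]
  · intro m n hmn
    have hsq := Nat.squarefree_mul hmn
    rw [FF_apply, FF_apply, FF_apply]
    by_cases hm : Squarefree m <;> by_cases hn : Squarefree n
    · rw [if_pos (hsq.mpr ⟨hm, hn⟩), if_pos hm, if_pos hn,
        Nat.primeFactors_mul hm.ne_zero hn.ne_zero,
        Finset.card_union_of_disjoint hmn.disjoint_primeFactors, pow_add]
    all_goals
      rw [if_neg (fun h => by rcases hsq.mp h with ⟨h1, h2⟩; tauto)]
      simp [hm, hn]

lemma gg_pow_eq_cc {p : ℕ} (hp : p.Prime) (k : ℕ) : gg (p ^ k) = cc k := by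
  rcases eq_or_ne k 0 with rfl | hk
  · simp [gg, cc]
  · exact gg_prime_pow hp hk

lemma not_squarefree_pp {p : ℕ} (hp : p.Prime) {i : ℕ} (hi : 2 ≤ i) :
    ¬ Squarefree (p ^ i) := by
  intro h
  have : p * p ∣ p ^ i := by
    have : p ^ 2 ∣ p ^ i := pow_dvd_pow p hi
    rwa [sq] at this
  exact hp.one_lt.ne' (Nat.isUnit_iff.mp (h p this))

lemma key_identity : FF = gg * (σ 0 : ArithmeticFunction ℕ) := by
  rw [ArithmeticFunction.IsMultiplicative.eq_iff_eq_on_prime_powers _ FF_mult _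
    (gg_mult.mul (isMultiplicative_sigma.natCast))]
  intro p i hp
  rw [ArithmeticFunction.mul_apply,
    Nat.sum_divisorsAntidiagonal
      (f := fun a b => gg a * ((σ 0 : ArithmeticFunction ℕ) : ArithmeticFunction ℝ) b),
    Nat.sum_divisors_prime_pow hp]
  have hstep : ∀ j ∈ Finset.range (i + 1),
      gg (p ^ j) * ((σ 0 : ArithmeticFunction ℕ) : ArithmeticFunction ℝ) (p ^ i / p ^ j)
        = cc j * ((i - j : ℕ) + 1 : ℝ) := by
    intro j hj
    rw [Finset.mem_range, Nat.lt_succ_iff] at hj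
    rw [Nat.pow_div hj hp.pos, gg_pow_eq_cc hp, natCoe_apply,
      sigma_zero_apply_prime_pow hp]
    push_cast
    ring
  rw [Finset.sum_congr rfl hstep]
  match i, hp with
  | 0, _ => simp [FF_apply, cc]
  | 1, hp =>
      simp [FF_apply, hp.squarefree, hp.primeFactors, cc, Finset.sum_range_succ]
      norm_num
  | 2, hp =>
      rw [FF_apply, if_neg (not_squarefree_pp hp le_rfl)]
      simp [Finset.sum_range_succ, cc]
      norm_num
  | (k+3), hp =>
      rw [FF_apply, if_neg (not_squarefree_pp hp (by omega))]
      have hsub : ({0, 2, 3} : Finset ℕ) ⊆ Finset.range (k + 3 + 1) := by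
        intro x hx; fin_cases hx <;> simp <;> omega
      rw [← Finset.sum_subset hsub]
      · rw [Finset.sum_insert (by decide), Finset.sum_insert (by decide),
          Finset.sum_singleton]
        simp only [cc]
        norm_num
        push_cast [Nat.cast_sub (by omega : 2 ≤ k + 3), Nat.cast_sub (by omega : 3 ≤ k + 3)]
        ring
      · intro x _ hx
        simp only [Finset.mem_insert, Finset.mem_singleton, not_or] at hx
        obtain ⟨h0, h2, h3⟩ := hx
        simp [cc, h0, h2, h3]


/-! ### Summability of `|gg d| / d` -/

lemma abs_cc_le (e : ℕ) : |cc e| ≤ 3 := by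
  unfold cc; split_ifs <;> norm_num

lemma cc_ne_zero {e : ℕ} (h : cc e ≠ 0) : e = 0 ∨ e = 2 ∨ e = 3 := by
  unfold cc at h; split_ifs at h <;> tauto

lemma abs_gg_le (d : ℕ) : |gg d| ≤ 3 ^ d.primeFactors.card := by
  rcases eq_or_ne d 0 with rfl | hd
  · simp [gg]
  rw [gg_apply hd, Finset.abs_prod]
  calc ∏ p ∈ d.primeFactors, |cc (d.factorization p)|
      ≤ ∏ p ∈ d.primeFactors, 3 :=
        Finset.prod_le_prod (fun _ _ => abs_nonneg _) (fun p _ => abs_cc_le _)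
    _ = 3 ^ d.primeFactors.card := by rw [Finset.prod_const]

lemma gg_support {d : ℕ} (hd : d ≠ 0) (h : gg d ≠ 0) :
    ∀ p ∈ d.primeFactors, d.factorization p = 2 ∨ d.factorization p = 3 := by
  intro p hp
  rw [gg_apply hd] at h
  have := Finset.prod_ne_zero_iff.mp h p hp
  rcases cc_ne_zero this with h0 | h2 | h3
  · exfalso
    rw [← Nat.support_factorization, Finsupp.mem_support_iff] at hp
    exact hp h0
  · exact Or.inl h2
  · exact Or.inr h3

/-- the radical -/
def rad (d : ℕ) : ℕ := ∏ p ∈ d.primeFactors, p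

lemma rad_pos {d : ℕ} : 0 < rad d :=
  Finset.prod_pos fun p hp => (Nat.prime_of_mem_primeFactors hp).pos

lemma rad_factorization {d : ℕ} (q : ℕ) :
    (rad d).factorization q = if q ∈ d.primeFactors then 1 else 0 := by
  unfold rad
  rw [Nat.factorization_prod (fun p hp => (Nat.prime_of_mem_primeFactors hp).pos.ne')]
  rw [Finsupp.finset_sum_apply]
  rw [Finset.sum_congr rfl
    (fun p hp => by rw [(Nat.prime_of_mem_primeFactors hp).factorization])]
  simp [Finsupp.single_apply]

lemma rad_sq_dvd {d : ℕ} (hd : d ≠ 0) (h : gg d ≠ 0) : (rad d) ^ 2 ∣ d := by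
  rw [← Nat.factorization_le_iff_dvd (pow_ne_zero _ rad_pos.ne') hd]
  intro q
  rw [Nat.factorization_pow, Finsupp.smul_apply, rad_factorization, smul_eq_mul]
  by_cases hq : q ∈ d.primeFactors
  · rw [if_pos hq]
    rcases gg_support hd h q hq with h2 | h3 <;> omega
  · rw [if_neg hq]
    simp

lemma s_dvd_rad {d : ℕ} (hd : d ≠ 0) (h : gg d ≠ 0) : d / (rad d) ^ 2 ∣ rad d := by
  have hdvd := rad_sq_dvd hd h
  have hs0 : d / (rad d) ^ 2 ≠ 0 := by
    exact Nat.div_ne_zero_iff_of_dvd hdvd |>.mpr ⟨hd, pow_ne_zero _ rad_pos.ne'⟩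
  rw [← Nat.factorization_le_iff_dvd hs0 rad_pos.ne']
  intro q
  rw [Nat.factorization_div hdvd, Finsupp.tsub_apply, Nat.factorization_pow,
    Finsupp.smul_apply, rad_factorization]
  by_cases hq : q ∈ d.primeFactors
  · simp only [if_pos hq, smul_eq_mul]
    rcases gg_support hd h q hq with h2 | h3 <;> omega
  · simp only [if_neg hq, smul_eq_mul]
    have : d.factorization q = 0 := by
      rw [← Finsupp.notMem_support_iff, Nat.support_factorization]; exact hq
    omega

lemma pow81 {d : ℕ} (hd : d ≠ 0) :
    (81 : ℕ) ^ d.primeFactors.card ≤ 81 ^ 82 * rad d := by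
  classical
  have hsplit : d.primeFactors = d.primeFactors.filter (· < 82) ∪
      d.primeFactors.filter (fun p => ¬ p < 82) := (Finset.filter_union_filter_not_eq _ _).symm
  have h1 : (81:ℕ) ^ d.primeFactors.card = ∏ p ∈ d.primeFactors, 81 := by
    rw [Finset.prod_const]
  rw [h1, hsplit, Finset.prod_union (Finset.disjoint_filter_filter_not _ _ _)]
  have hsmall : ∏ p ∈ d.primeFactors.filter (· < 82), (81:ℕ) ≤ 81 ^ 82 := by
    rw [Finset.prod_const]
    apply Nat.pow_le_pow_right (by norm_num)
    calc (d.primeFactors.filter (· < 82)).card ≤ (Finset.range 82).card := by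
          apply Finset.card_le_card
          intro x hx
          rw [Finset.mem_filter] at hx
          exact Finset.mem_range.mpr hx.2
      _ = 82 := Finset.card_range _
  have hlarge : ∏ p ∈ d.primeFactors.filter (fun p => ¬ p < 82), (81:ℕ) ≤ rad d := by
    calc ∏ p ∈ d.primeFactors.filter (fun p => ¬ p < 82), (81:ℕ)
        ≤ ∏ p ∈ d.primeFactors.filter (fun p => ¬ p < 82), p :=
          Finset.prod_le_prod' (fun p hp => by
            have := (Finset.mem_filter.mp hp).2; omega)
      _ ≤ rad d := by
          apply Nat.le_of_dvd rad_pos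
          exact Finset.prod_dvd_prod_of_subset
            (d.primeFactors.filter (fun p => ¬ p < 82)) d.primeFactors (fun p => p)
            (Finset.filter_subset _ _)
  calc (∏ p ∈ d.primeFactors.filter (· < 82), (81:ℕ)) *
        ∏ p ∈ d.primeFactors.filter (fun p => ¬ p < 82), (81:ℕ)
      ≤ 81 ^ 82 * rad d := Nat.mul_le_mul hsmall hlarge

noncomputable def bnd : ℕ × ℕ → ℝ := fun rs =>
  3 ^ 82 * ((rs.1 : ℝ) ^ (5/4 : ℝ))⁻¹ * ((rs.2 : ℝ) ^ (3/2 : ℝ))⁻¹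

lemma bnd_nonneg (rs : ℕ × ℕ) : 0 ≤ bnd rs := by
  unfold bnd; positivity

lemma bnd_summable : Summable bnd := by
  have h1 : Summable (fun n : ℕ => 3 ^ 82 * ((n : ℝ) ^ (5/4 : ℝ))⁻¹) :=
    (Real.summable_nat_rpow_inv.mpr (by norm_num)).mul_left _
  have h2 : Summable (fun n : ℕ => ((n : ℝ) ^ (3/2 : ℝ))⁻¹) :=
    Real.summable_nat_rpow_inv.mpr (by norm_num)
  have key := h1.mul_of_nonneg h2 (fun n => by positivity) (fun n => by positivity)
  exact key

lemma gg_le_bnd {d : ℕ} (hd : d ≠ 0) (h : gg d ≠ 0) :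
    |gg d| / d ≤ bnd (rad d, d / (rad d) ^ 2) := by
  set r := rad d with hr
  set t := d / r ^ 2 with ht
  have hdvd : r ^ 2 ∣ d := rad_sq_dvd hd h
  have hdeq : d = r ^ 2 * t := (Nat.mul_div_cancel' hdvd).symm
  have htr : t ∣ r := s_dvd_rad hd h
  have hr1 : (1 : ℝ) ≤ r := Nat.one_le_cast.mpr rad_pos
  have hrpos : (0 : ℝ) < r := lt_of_lt_of_le one_pos hr1
  have ht0 : t ≠ 0 := fun h0 => hd (by rw [hdeq, h0, mul_zero])
  have ht1 : (1 : ℝ) ≤ t := Nat.one_le_cast.mpr (Nat.pos_of_ne_zero ht0)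
  have htpos : (0 : ℝ) < t := lt_of_lt_of_le one_pos ht1
  have htr' : (t : ℝ) ≤ r := Nat.cast_le.mpr (Nat.le_of_dvd rad_pos htr)
  -- step 1 : |gg d| ≤ 3 ^ 82 * r ^ (1/4)
  have h4 : |gg d| ^ (4 : ℕ) ≤ 3 ^ 328 * (r : ℝ) := by
    calc |gg d| ^ (4 : ℕ) ≤ ((3 : ℝ) ^ d.primeFactors.card) ^ (4 : ℕ) := by
          exact pow_le_pow_left₀ (abs_nonneg _) (abs_gg_le d) 4
      _ = ((81 : ℕ) ^ d.primeFactors.card : ℕ) := by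
          push_cast
          rw [← pow_mul, pow_mul']
          norm_num
      _ ≤ ((81 ^ 82 * rad d : ℕ) : ℝ) := Nat.cast_le.mpr (pow81 hd)
      _ = 3 ^ 328 * (r : ℝ) := by
          rw [hr, show (3:ℝ) ^ 328 = (3 ^ 4) ^ 82 by rw [← pow_mul]]; push_cast; norm_num
  have hstep1 : |gg d| ≤ 3 ^ 82 * (r : ℝ) ^ (1/4 : ℝ) := by
    have ha : (0:ℝ) ≤ |gg d| := abs_nonneg _
    have h1 : |gg d| = (|gg d| ^ (4:ℕ)) ^ (1/4 : ℝ) := by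
      rw [← Real.rpow_natCast |gg d| 4, ← Real.rpow_mul ha]
      norm_num
    rw [h1]
    calc (|gg d| ^ (4:ℕ)) ^ (1/4 : ℝ) ≤ (3 ^ 328 * (r : ℝ)) ^ (1/4 : ℝ) :=
          Real.rpow_le_rpow (by positivity) h4 (by norm_num)
      _ = ((3:ℝ) ^ (328:ℕ)) ^ (1/4 : ℝ) * (r : ℝ) ^ (1/4 : ℝ) :=
          Real.mul_rpow (by positivity) (by positivity)
      _ = 3 ^ 82 * (r : ℝ) ^ (1/4 : ℝ) := by
          rw [← Real.rpow_natCast 3 328, ← Real.rpow_mul (by norm_num)]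
          norm_num
  -- step 2 : key denominator comparison
  have hden : (r : ℝ) ^ (3/2 : ℝ) * (t : ℝ) ^ (3/2 : ℝ) ≤ (r : ℝ) ^ 2 * t := by
    have e1 : (r : ℝ) ^ (2:ℕ) = (r:ℝ) ^ (3/2 : ℝ) * (r:ℝ) ^ (1/2 : ℝ) := by
      rw [← Real.rpow_add hrpos, ← Real.rpow_natCast (r:ℝ) 2]
      norm_num
    have e2 : (t : ℝ) ^ (3/2 : ℝ) = (t:ℝ) * (t:ℝ) ^ (1/2 : ℝ) := by
      rw [show (3/2 : ℝ) = 1 + 1/2 by norm_num, Real.rpow_add htpos, Real.rpow_one]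
    rw [show ((r:ℝ)^2 : ℝ) = (r:ℝ) ^ (2:ℕ) by norm_num, e1, e2]
    have : (t:ℝ) ^ (1/2 : ℝ) ≤ (r:ℝ) ^ (1/2 : ℝ) :=
      Real.rpow_le_rpow htpos.le htr' (by norm_num)
    calc (r:ℝ) ^ (3/2:ℝ) * ((t:ℝ) * (t:ℝ) ^ (1/2:ℝ))
        ≤ (r:ℝ) ^ (3/2:ℝ) * ((t:ℝ) * (r:ℝ) ^ (1/2:ℝ)) := by
          apply mul_le_mul_of_nonneg_left _ (by positivity)
          exact mul_le_mul_of_nonneg_left this htpos.le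
      _ = (r:ℝ) ^ (3/2:ℝ) * (r:ℝ) ^ (1/2:ℝ) * t := by ring
  -- combine
  have hdr : (d : ℝ) = (r:ℝ) ^ 2 * t := by exact_mod_cast congrArg (Nat.cast (R := ℝ)) hdeq
  rw [hdr]
  unfold bnd
  simp only
  calc |gg d| / ((r:ℝ) ^ 2 * t) ≤ (3 ^ 82 * (r : ℝ) ^ (1/4 : ℝ)) / ((r:ℝ) ^ 2 * t) := by
        apply div_le_div_of_nonneg_right hstep1 (by positivity) |>.trans_eq rfl
    _ ≤ (3 ^ 82 * (r : ℝ) ^ (1/4 : ℝ)) / ((r : ℝ) ^ (3/2 : ℝ) * (t : ℝ) ^ (3/2 : ℝ)) := by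
        apply div_le_div_of_nonneg_left (by positivity) (by positivity) hden
    _ = 3 ^ 82 * ((r:ℝ) ^ (5/4 : ℝ))⁻¹ * ((t:ℝ) ^ (3/2 : ℝ))⁻¹ := by
        rw [show (3:ℝ) ^ 82 * (r : ℝ) ^ (1/4 : ℝ) / ((r : ℝ) ^ (3/2 : ℝ) * (t : ℝ) ^ (3/2 : ℝ))
          = 3 ^ 82 * ((r : ℝ) ^ (1/4 : ℝ) / (r : ℝ) ^ (3/2 : ℝ)) * ((t:ℝ) ^ (3/2 : ℝ))⁻¹ by
            field_simp]
        congr 2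
        rw [← Real.rpow_sub hrpos]
        rw [show (1/4 : ℝ) - 3/2 = -(5/4) by norm_num, Real.rpow_neg hrpos.le]

lemma gg_div_summable : Summable (fun d : ℕ => |gg d| / d) := by
  apply summable_of_sum_range_le (c := ∑' rs, bnd rs) (fun d => by positivity)
  intro n
  classical
  have hfilter : ∑ d ∈ (Finset.range n).filter (fun d => gg d ≠ 0 ∧ d ≠ 0), |gg d| / d
      = ∑ d ∈ Finset.range n, |gg d| / d := by
    apply Finset.sum_filter_of_ne
    intro d _ hne
    constructor
    · intro h0; rw [h0] at hne; simp at hne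
    · intro h0; rw [h0] at hne; simp at hne
  rw [← hfilter]
  set A := (Finset.range n).filter (fun d => gg d ≠ 0 ∧ d ≠ 0) with hA
  have h1 : ∑ d ∈ A, |gg d| / d ≤ ∑ d ∈ A, bnd (rad d, d / rad d ^ 2) := by
    apply Finset.sum_le_sum
    intro d hd
    obtain ⟨hgg, hd0⟩ := (Finset.mem_filter.mp hd).2
    exact gg_le_bnd hd0 hgg
  have h2 : ∑ d ∈ A, bnd (rad d, d / rad d ^ 2)
      = ∑ rs ∈ A.image (fun d => (rad d, d / rad d ^ 2)), bnd rs := by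
    rw [Finset.sum_image]
    intro x hx y hy hxy
    obtain ⟨hggx, hx0⟩ := (Finset.mem_filter.mp hx).2
    obtain ⟨hggy, hy0⟩ := (Finset.mem_filter.mp hy).2
    have ex : x = rad x ^ 2 * (x / rad x ^ 2) := (Nat.mul_div_cancel' (rad_sq_dvd hx0 hggx)).symm
    have ey : y = rad y ^ 2 * (y / rad y ^ 2) := (Nat.mul_div_cancel' (rad_sq_dvd hy0 hggy)).symm
    rw [Prod.mk.injEq] at hxy
    calc x = rad x ^ 2 * (x / rad x ^ 2) := ex
      _ = rad y ^ 2 * (y / rad y ^ 2) := by rw [hxy.2, hxy.1]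
      _ = y := ey.symm
  calc ∑ d ∈ A, |gg d| / d ≤ ∑ rs ∈ A.image (fun d => (rad d, d / rad d ^ 2)), bnd rs :=
        h2 ▸ h1
    _ ≤ ∑' rs, bnd rs := Summable.sum_le_tsum _ (fun rs _ => bnd_nonneg rs) bnd_summable


/-! ### Divisor sum asymptotics -/

noncomputable def DD : ℕ → ℝ := fun n =>
  ∑ e ∈ Finset.Icc 1 n, ((σ 0 : ArithmeticFunction ℕ) e : ℝ)

lemma divisor_swap (n : ℕ) :
    ∑ e ∈ Finset.Icc 1 n, (σ 0) e = ∑ k ∈ Finset.Icc 1 n, n / k := by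
  classical
  have h1 : ∀ e ∈ Finset.Icc 1 n, (σ 0) e = ∑ k ∈ Finset.Icc 1 n, if k ∣ e then 1 else 0 := by
    intro e he
    rw [Finset.mem_Icc] at he
    rw [sigma_zero_apply, ← Finset.card_filter]
    congr 1
    ext a
    simp only [Nat.mem_divisors, Finset.mem_filter, Finset.mem_Icc]
    constructor
    · rintro ⟨hdvd, hne⟩
      refine ⟨⟨Nat.pos_of_ne_zero fun h0 => hne ?_,
        le_trans (Nat.le_of_dvd (Nat.pos_of_ne_zero hne) hdvd) he.2⟩, hdvd⟩
      subst h0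
      exact Nat.eq_zero_of_zero_dvd hdvd
    · rintro ⟨⟨ha1, _⟩, hdvd⟩
      exact ⟨hdvd, by omega⟩
  rw [Finset.sum_congr rfl h1, Finset.sum_comm]
  refine Finset.sum_congr rfl fun k hk => ?_
  rw [← Finset.card_filter]
  rw [show Finset.Icc 1 n = Finset.Ioc 0 n from Finset.Icc_add_one_left_eq_Ioc 0 n]
  exact Nat.Ioc_filter_dvd_card_eq_div n k

lemma DD_eq (n : ℕ) : DD n = ∑ k ∈ Finset.Icc 1 n, ((n / k : ℕ) : ℝ) := by
  unfold DD
  rw [show (∑ e ∈ Finset.Icc 1 n, ((σ 0 : ArithmeticFunction ℕ) e : ℝ))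
    = ((∑ e ∈ Finset.Icc 1 n, (σ 0) e : ℕ) : ℝ) by push_cast; rfl, divisor_swap]
  push_cast; rfl

lemma DD_nonneg (n : ℕ) : 0 ≤ DD n := by
  rw [DD_eq]; positivity

lemma DD_le (n : ℕ) : DD n ≤ n * (harmonic n : ℝ) := by
  rw [DD_eq]
  have : (n : ℝ) * (harmonic n : ℝ) = ∑ k ∈ Finset.Icc 1 n, (n : ℝ) / k := by
    rw [harmonic_eq_sum_Icc]
    push_cast
    rw [Finset.mul_sum]
    exact Finset.sum_congr rfl fun k _ => by rw [div_eq_mul_inv]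
  rw [this]
  exact Finset.sum_le_sum fun k _ => Nat.cast_div_le
 
lemma le_DD (n : ℕ) : n * (harmonic n : ℝ) - n ≤ DD n := by
  rw [DD_eq]
  have h1 : (n : ℝ) * (harmonic n : ℝ) - n = ∑ k ∈ Finset.Icc 1 n, ((n : ℝ) / k - 1) := by
    rw [Finset.sum_sub_distrib, Finset.sum_const, Nat.card_Icc, harmonic_eq_sum_Icc]
    push_cast
    rw [Finset.mul_sum]
    simp [div_eq_mul_inv]
  rw [h1]
  refine Finset.sum_le_sum fun k hk => ?_
  have : ((n / k : ℕ) : ℝ) = (⌊(n : ℝ) / (k : ℝ)⌋₊ : ℝ) := by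
    rw [Nat.floor_div_natCast, Nat.floor_natCast]
  rw [this]
  have := Nat.sub_one_lt_floor ((n : ℝ) / (k : ℝ))
  linarith

lemma DD_le' (n : ℕ) : DD n ≤ n * (1 + Real.log n) := by
  calc DD n ≤ n * (harmonic n : ℝ) := DD_le n
    _ ≤ n * (1 + Real.log n) :=
        mul_le_mul_of_nonneg_left (harmonic_le_one_add_log n) (Nat.cast_nonneg n)

lemma harmonic_div_log (c : ℝ) :
    Tendsto (fun n : ℕ => ((harmonic n : ℝ) + c) / Real.log n) atTop (𝓝 1) := by
  have hloginv : Tendsto (fun n : ℕ => (Real.log n)⁻¹) atTop (𝓝 0) :=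
    (Real.tendsto_log_atTop.comp tendsto_natCast_atTop_atTop).inv_tendsto_atTop
  have h2 := (Real.tendsto_harmonic_sub_log.add_const c).mul hloginv
  rw [mul_zero] at h2
  have h3 := h2.add_const 1
  rw [zero_add] at h3
  apply h3.congr'
  filter_upwards [eventually_ge_atTop 2] with n hn
  have hlogpos : 0 < Real.log n := by
    apply Real.log_pos
    exact_mod_cast (by omega : (1:ℕ) < n)
  field_simp
  ring

lemma tendsto_DD : Tendsto (fun n : ℕ => DD n / ((n : ℝ) * Real.log n)) atTop (𝓝 1) := by
  apply tendsto_of_tendsto_of_tendsto_of_le_of_le' (harmonic_div_log (-1)) (harmonic_div_log 0)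
  · filter_upwards [eventually_ge_atTop 2] with n hn
    have hnpos : (0:ℝ) < n := by exact_mod_cast (by omega : 0 < n)
    have hlogpos : 0 < Real.log n := Real.log_pos (by exact_mod_cast (by omega : (1:ℕ) < n))
    have h2 : ((harmonic n : ℝ) + -1) / Real.log n
        = ((n:ℝ) * (harmonic n : ℝ) - n) / ((n:ℝ) * Real.log n) := by
      rw [div_eq_div_iff hlogpos.ne' (by positivity)]
      ring
    rw [h2]
    exact div_le_div_of_nonneg_right (le_DD n) (by positivity)
  · filter_upwards [eventually_ge_atTop 2] with n hn
    have hnpos : (0:ℝ) < n := by exact_mod_cast (by omega : 0 < n)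
    have hlogpos : 0 < Real.log n := Real.log_pos (by exact_mod_cast (by omega : (1:ℕ) < n))
    have h2 : ((harmonic n : ℝ) + 0) / Real.log n
        = ((n:ℝ) * (harmonic n : ℝ)) / ((n:ℝ) * Real.log n) := by
      rw [add_zero, div_eq_div_iff hlogpos.ne' (by positivity)]
      ring
    rw [h2]
    exact div_le_div_of_nonneg_right (DD_le n) (by positivity)


lemma tendsto_linear_div (c d : ℝ) :
    Tendsto (fun X : ℝ => (c * X + d) / X) atTop (𝓝 c) := by
  have h1 : Tendsto (fun X : ℝ => c + d / X) atTop (𝓝 c) := by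
    have := tendsto_const_nhds (x := d) (f := atTop (α := ℝ)) |>.div_atTop tendsto_id
    simpa using (tendsto_const_nhds (x := c) (f := atTop (α := ℝ))).add this
  apply h1.congr'
  filter_upwards [eventually_gt_atTop 0] with X hX
  field_simp

lemma lemA {u : ℝ → ℕ} {c : ℝ} (hc : 0 < c)
    (hlow : ∀ᶠ X in atTop, c * X - 1 ≤ (u X : ℝ))
    (hhigh : ∀ᶠ X in atTop, (u X : ℝ) ≤ c * X + 1) :
    Tendsto (fun X => DD (u X) / (X * Real.log X)) atTop (𝓝 c) := by
  have hu : Tendsto u atTop atTop := by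
    rw [tendsto_atTop]
    intro b
    filter_upwards [hlow, eventually_ge_atTop (((b : ℝ) + 1) / c)] with X h1 h2
    have h3 : (b : ℝ) ≤ u X := by
      have h4 : (b : ℝ) + 1 ≤ c * X := by
        calc (b : ℝ) + 1 = c * (((b : ℝ) + 1) / c) := by field_simp
          _ ≤ c * X := mul_le_mul_of_nonneg_left h2 hc.le
      linarith
    exact_mod_cast h3
  have huc : Tendsto (fun X => (u X : ℝ) / X) atTop (𝓝 c) := by
    apply tendsto_of_tendsto_of_tendsto_of_le_of_le'
      (tendsto_linear_div c (-1)) (tendsto_linear_div c 1)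
    · filter_upwards [hlow, eventually_gt_atTop 0] with X h1 h2
      apply div_le_div_of_nonneg_right _ h2.le
      linarith
    · filter_upwards [hhigh, eventually_gt_atTop 0] with X h1 h2
      exact div_le_div_of_nonneg_right h1 h2.le
  have hDD : Tendsto (fun X => DD (u X) / ((u X : ℝ) * Real.log (u X))) atTop (𝓝 1) :=
    tendsto_DD.comp hu
  have hlog : Tendsto (fun X => Real.log (u X) / Real.log X) atTop (𝓝 1) := by
    have h1 : Tendsto (fun X => Real.log ((u X : ℝ) / X)) atTop (𝓝 (Real.log c)) :=
      ((Real.continuousAt_log hc.ne').tendsto).comp huc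
    have h2 : Tendsto (fun X : ℝ => (Real.log X)⁻¹) atTop (𝓝 0) :=
      Real.tendsto_log_atTop.inv_tendsto_atTop
    have h3 := (h1.mul h2).add_const 1
    rw [mul_zero, zero_add] at h3
    apply h3.congr'
    filter_upwards [hu.eventually (eventually_ge_atTop 1), eventually_ge_atTop 2] with X h4 h5
    have hX0 : (0:ℝ) < X := by linarith
    have hu0 : (0:ℝ) < (u X : ℝ) := by exact_mod_cast (by omega : 0 < u X)
    have hlogX : 0 < Real.log X := Real.log_pos (by linarith)
    rw [Real.log_div hu0.ne' hX0.ne']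
    field_simp
    ring
  have hmain := (hDD.mul huc).mul hlog
  rw [one_mul, mul_one] at hmain
  apply hmain.congr'
  filter_upwards [hu.eventually (eventually_ge_atTop 2), eventually_ge_atTop 2] with X h4 h5
  have hX0 : (0:ℝ) < X := by linarith
  have hu0 : (0:ℝ) < (u X : ℝ) := by exact_mod_cast (by omega : 0 < u X)
  have hlogX : (0:ℝ) < Real.log X := Real.log_pos (by linarith)
  have hlogu : (0:ℝ) < Real.log (u X) :=
    Real.log_pos (by exact_mod_cast (by omega : (1:ℕ) < u X))
  field_simp

lemma floor_lemma {d : ℕ} (hd : d ≠ 0) :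
    Tendsto (fun X : ℝ => DD ⌊2 * X / d⌋₊ / (X * Real.log X)) atTop (𝓝 (2 / d)) := by
  have hd0 : (0:ℝ) < d := by exact_mod_cast Nat.pos_of_ne_zero hd
  apply lemA (by positivity)
  · filter_upwards [eventually_ge_atTop 0] with X hX
    have h1 : 2 * X / d = (2 / d) * X := by ring
    have h2 := Nat.sub_one_lt_floor (2 * X / d)
    linarith
  · filter_upwards [eventually_ge_atTop 0] with X hX
    have h1 : (⌊2 * X / d⌋₊ : ℝ) ≤ 2 * X / d := Nat.floor_le (by positivity)
    have h2 : 2 * X / d = (2 / d) * X := by ring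
    linarith

lemma ceil_lemma {d : ℕ} (hd : d ≠ 0) :
    Tendsto (fun X : ℝ => DD (⌈X / d⌉₊ - 1) / (X * Real.log X)) atTop (𝓝 (1 / d)) := by
  have hd0 : (0:ℝ) < d := by exact_mod_cast Nat.pos_of_ne_zero hd
  apply lemA (by positivity)
  · filter_upwards [eventually_ge_atTop (d : ℝ)] with X hX
    have hge : (1:ℝ) ≤ X / d := (one_le_div hd0).mpr hX
    have h1 : 1 ≤ ⌈X / d⌉₊ := by
      rw [Nat.one_le_ceil_iff]
      linarith
    have h2 : X / d ≤ (⌈X / d⌉₊ : ℝ) := Nat.le_ceil _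
    have h3 : ((⌈X / d⌉₊ - 1 : ℕ) : ℝ) = (⌈X / d⌉₊ : ℝ) - 1 := by
      rw [Nat.cast_sub h1, Nat.cast_one]
    rw [h3]
    have h4 : X / d = (1 / d) * X := by ring
    linarith
  · filter_upwards [eventually_ge_atTop (d : ℝ)] with X hX
    have hge : (0:ℝ) ≤ X / d := div_nonneg (le_trans hd0.le hX) hd0.le
    have h2 : (⌈X / d⌉₊ : ℝ) < X / d + 1 := Nat.ceil_lt_add_one hge
    have h3 : ((⌈X / d⌉₊ - 1 : ℕ) : ℝ) ≤ (⌈X / d⌉₊ : ℝ) :=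
      Nat.cast_le.mpr (Nat.sub_le _ _)
    have h4 : X / d = (1 / d) * X := by ring
    have := le_trans h3 h2.le
    linarith


/-! ### The per-`d` terms -/

noncomputable def WW (d : ℕ) (X : ℝ) : ℝ :=
  ∑ e ∈ Finset.Icc ⌈X / d⌉₊ ⌊2 * X / d⌋₊, ((σ 0 : ArithmeticFunction ℕ) e : ℝ)

noncomputable def term (X : ℝ) (d : ℕ) : ℝ := gg d * WW d X / (X * Real.log X)

lemma WW_nonneg (d : ℕ) (X : ℝ) : 0 ≤ WW d X := by
  unfold WW; positivity

lemma Icc_Ioc (a b : ℕ) (ha : 1 ≤ a) : Finset.Icc a b = Finset.Ioc (a - 1) b := by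
  ext x
  rw [Finset.mem_Icc, Finset.mem_Ioc]
  omega

lemma DD_Ioc (n : ℕ) : DD n = ∑ e ∈ Finset.Ioc 0 n, ((σ 0 : ArithmeticFunction ℕ) e : ℝ) := by
  unfold DD
  rw [show Finset.Icc 1 n = Finset.Ioc 0 n from Finset.Icc_add_one_left_eq_Ioc 0 n]

lemma WW_diff {d : ℕ} (hd : d ≠ 0) : ∀ᶠ X in atTop,
    WW d X = DD ⌊2 * X / d⌋₊ - DD (⌈X / d⌉₊ - 1) := by
  have hd0 : (0:ℝ) < d := by exact_mod_cast Nat.pos_of_ne_zero hd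
  filter_upwards [eventually_ge_atTop (d : ℝ)] with X hX
  have hX0 : (0:ℝ) < X := lt_of_lt_of_le hd0 hX
  have hyd : (1:ℝ) ≤ X / d := (one_le_div hd0).mpr hX
  set a := ⌈X / d⌉₊ with haeq
  set b := ⌊2 * X / d⌋₊ with hbeq
  have ha : 1 ≤ a := Nat.one_le_ceil_iff.mpr (by linarith)
  have hab : a - 1 ≤ b := by
    have h1 : (a : ℝ) < X / d + 1 := Nat.ceil_lt_add_one (by linarith)
    have h2 : 2 * X / d - 1 < (b : ℝ) := Nat.sub_one_lt_floor _
    have h3 : ((a - 1 : ℕ) : ℝ) < (b : ℝ) + 1 := by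
      rw [Nat.cast_sub ha, Nat.cast_one]
      have : 2 * X / d = 2 * (X / d) := by ring
      linarith
    exact_mod_cast Nat.lt_add_one_iff.mp (by exact_mod_cast h3)
  have hsplit := Finset.sum_Ioc_consecutive
    (fun e => ((σ 0 : ArithmeticFunction ℕ) e : ℝ)) (Nat.zero_le (a - 1)) hab
  unfold WW
  rw [Icc_Ioc a b ha, DD_Ioc, DD_Ioc, ← hsplit]
  ring

lemma term_tendsto (d : ℕ) : Tendsto (fun X => term X d) atTop (𝓝 (gg d / d)) := by
  rcases eq_or_ne d 0 with rfl | hd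
  · have : (fun X => term X 0) = (fun _ => 0) := by
      funext X
      unfold term
      rw [gg.map_zero]
      ring
    rw [this]
    simpa [gg.map_zero] using tendsto_const_nhds (x := (0:ℝ)) (f := atTop (α := ℝ))
  · have hd0 : (0:ℝ) < d := by exact_mod_cast Nat.pos_of_ne_zero hd
    have h1 := ((floor_lemma hd).sub (ceil_lemma hd)).const_mul (gg d)
    have h2 : gg d * (2 / (d:ℝ) - 1 / d) = gg d / d := by
      ring
    rw [h2] at h1
    apply h1.congr'
    filter_upwards [WW_diff hd] with X hW
    unfold term
    rw [hW]
    ring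

lemma term_bound : ∀ᶠ X in atTop, ∀ d : ℕ, |term X d| ≤ 6 * (|gg d| / d) := by
  filter_upwards [eventually_ge_atTop (Real.exp 1)] with X hX
  have hexp2 : (2:ℝ) ≤ Real.exp 1 := by
    have := Real.add_one_le_exp 1; linarith
  have hX1 : (1:ℝ) < X := by linarith
  have hX0 : (0:ℝ) < X := by linarith
  have hlogX : (1:ℝ) ≤ Real.log X := by
    rw [← Real.log_exp 1]
    exact Real.log_le_log (Real.exp_pos 1) hX
  have hlogX0 : (0:ℝ) < Real.log X := by linarith
  intro d
  rcases eq_or_ne d 0 with rfl | hd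
  · simp [term, gg.map_zero]
  have hd0 : (0:ℝ) < d := by exact_mod_cast Nat.pos_of_ne_zero hd
  have hd1 : (1:ℝ) ≤ d := by exact_mod_cast Nat.pos_of_ne_zero hd
  -- key : WW d X ≤ 6 * X * log X / d
  have hW : WW d X ≤ 6 * X * Real.log X / d := by
    set b := ⌊2 * X / d⌋₊ with hbeq
    have hb2X : (b : ℝ) ≤ 2 * X / d := Nat.floor_le (by positivity)
    have hsub : WW d X ≤ DD b := by
      unfold WW
      rw [DD_Ioc, show Finset.Ioc 0 b = Finset.Icc 1 b from (Finset.Icc_add_one_left_eq_Ioc 0 b).symm]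
      apply Finset.sum_le_sum_of_subset_of_nonneg
      · intro e he
        rw [Finset.mem_Icc] at he ⊢
        have h1 : 1 ≤ ⌈X / d⌉₊ := Nat.one_le_ceil_iff.mpr (by positivity)
        omega
      · intro e _ _
        positivity
    rcases eq_or_ne b 0 with hb0 | hb0
    · rw [hb0] at hsub
      have : DD 0 = 0 := by simp [DD]
      rw [this] at hsub
      calc WW d X ≤ 0 := hsub
        _ ≤ 6 * X * Real.log X / d := by positivity
    · have hb1 : (1:ℝ) ≤ b := by exact_mod_cast Nat.pos_of_ne_zero hb0
      have hlogb : Real.log b ≤ Real.log (2 * X) := by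
        apply Real.log_le_log (by linarith)
        calc (b:ℝ) ≤ 2 * X / d := hb2X
          _ ≤ 2 * X := div_le_self (by positivity) hd1
      have hD : DD b ≤ (2 * X / d) * (1 + Real.log (2 * X)) := by
        calc DD b ≤ b * (1 + Real.log b) := DD_le' b
          _ ≤ (2 * X / d) * (1 + Real.log (2 * X)) := by
              apply mul_le_mul hb2X (by linarith) (by nlinarith [Real.log_nonneg hb1]) (by positivity)
      have hlog2X : 1 + Real.log (2 * X) ≤ 3 * Real.log X := by
        rw [Real.log_mul (by norm_num) hX0.ne']
        have hlog2 : Real.log 2 ≤ 1 := by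
          rw [← Real.log_exp 1]
          apply Real.log_le_log (by norm_num)
          linarith
        linarith
      refine hsub.trans ?_
      calc DD b ≤ (2 * X / d) * (1 + Real.log (2 * X)) := hD
        _ ≤ (2 * X / d) * (3 * Real.log X) :=
            mul_le_mul_of_nonneg_left hlog2X (by positivity)
        _ = 6 * X * Real.log X / d := by ring
  unfold term
  rw [abs_div, abs_mul, abs_of_nonneg (WW_nonneg d X),
    abs_of_pos (by positivity : (0:ℝ) < X * Real.log X)]
  rw [div_le_iff₀ (by positivity)]
  calc |gg d| * WW d X ≤ |gg d| * (6 * X * Real.log X / d) :=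
        mul_le_mul_of_nonneg_left hW (abs_nonneg _)
    _ = 6 * (|gg d| / d) * (X * Real.log X) := by ring


/-! ### Rearrangement -/

lemma swap_lemma (A B : ℕ) (hA : 1 ≤ A) (v w : ℕ → ℝ) :
    ∑ N ∈ Finset.Icc A B, ∑ x ∈ N.divisorsAntidiagonal, v x.1 * w x.2
    = ∑ d ∈ Finset.Icc 1 B, v d *
        ∑ e ∈ (Finset.Icc 1 B).filter (fun e => A ≤ d * e ∧ d * e ≤ B), w e := by
  classical
  have hdisj : (↑(Finset.Icc A B) : Set ℕ).PairwiseDisjoint Nat.divisorsAntidiagonal := by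
    intro m _ n _ hmn
    apply Finset.disjoint_left.mpr
    intro x hxm hxn
    rw [Nat.mem_divisorsAntidiagonal] at hxm hxn
    exact hmn (hxm.1.symm.trans hxn.1)
  rw [← Finset.sum_biUnion hdisj]
  have hT : (Finset.Icc A B).biUnion Nat.divisorsAntidiagonal
      = ((Finset.Icc 1 B) ×ˢ (Finset.Icc 1 B)).filter
          (fun x => A ≤ x.1 * x.2 ∧ x.1 * x.2 ≤ B) := by
    ext x
    rw [Finset.mem_biUnion, Finset.mem_filter, Finset.mem_product]
    simp only [Finset.mem_Icc, Nat.mem_divisorsAntidiagonal]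
    constructor
    · rintro ⟨N, ⟨hAN, hNB⟩, hprod, hN0⟩
      have hx1 : 1 ≤ x.1 := Nat.pos_of_ne_zero (by
        intro h0; rw [h0, zero_mul] at hprod; omega)
      have hx2 : 1 ≤ x.2 := Nat.pos_of_ne_zero (by
        intro h0; rw [h0, mul_zero] at hprod; omega)
      have hxB1 : x.1 ≤ B := by
        calc x.1 ≤ x.1 * x.2 := Nat.le_mul_of_pos_right _ hx2
          _ = N := hprod
          _ ≤ B := hNB
      have hxB2 : x.2 ≤ B := by
        calc x.2 ≤ x.1 * x.2 := Nat.le_mul_of_pos_left _ hx1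
          _ = N := hprod
          _ ≤ B := hNB
      exact ⟨⟨⟨hx1, hxB1⟩, ⟨hx2, hxB2⟩⟩, by omega, by omega⟩
    · rintro ⟨⟨⟨hx1, _⟩, ⟨hx2, _⟩⟩, hlo, hhi⟩
      exact ⟨x.1 * x.2, ⟨hlo, hhi⟩, rfl, by positivity⟩
  rw [hT, Finset.sum_filter, Finset.sum_product]
  refine Finset.sum_congr rfl fun d _ => ?_
  rw [Finset.mul_sum, Finset.sum_filter]

lemma filter_eq_Icc {X : ℝ} (hX : 1 ≤ X) {d : ℕ} (hd : 1 ≤ d) :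
    (Finset.Icc 1 ⌊2 * X⌋₊).filter (fun e => ⌈X⌉₊ ≤ d * e ∧ d * e ≤ ⌊2 * X⌋₊)
      = Finset.Icc ⌈X / d⌉₊ ⌊2 * X / d⌋₊ := by
  have hd0 : (0:ℝ) < d := by exact_mod_cast hd
  have hX0 : (0:ℝ) < X := by linarith
  ext e
  rw [Finset.mem_filter, Finset.mem_Icc, Finset.mem_Icc]
  constructor
  · rintro ⟨⟨he1, heB⟩, hlow, hhigh⟩
    rw [Nat.ceil_le] at hlow
    push_cast at hlow
    constructor
    · rw [Nat.ceil_le, div_le_iff₀ hd0]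
      calc X ≤ (d:ℝ) * e := hlow
        _ = (e:ℝ) * d := by ring
    · rw [Nat.le_floor_iff (by positivity), le_div_iff₀ hd0]
      have hfl : (⌊2*X⌋₊ : ℝ) ≤ 2 * X := Nat.floor_le (by positivity)
      calc (e:ℝ) * d = ((d * e : ℕ) : ℝ) := by push_cast; ring
        _ ≤ (⌊2*X⌋₊ : ℝ) := by exact_mod_cast hhigh
        _ ≤ 2 * X := hfl
  · rintro ⟨hlo, hhi⟩
    have h1 : X / d ≤ (e : ℝ) := (Nat.le_ceil _).trans (Nat.cast_le.mpr hlo)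
    have h2 : (e : ℝ) ≤ 2 * X / d := (Nat.cast_le.mpr hhi).trans (Nat.floor_le (by positivity))
    have he1 : 1 ≤ e := by
      have : (0:ℝ) < e := lt_of_lt_of_le (by positivity) h1
      exact_mod_cast this
    have hde2X : (d : ℝ) * e ≤ 2 * X := by
      rw [mul_comm, ← le_div_iff₀ hd0]
      exact h2
    refine ⟨⟨he1, ?_⟩, ?_, ?_⟩
    · rw [Nat.le_floor_iff (by positivity)]
      calc (e:ℝ) ≤ 2 * X / d := h2
        _ ≤ 2 * X := div_le_self (by positivity) (by exact_mod_cast hd)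
    · rw [Nat.ceil_le]
      push_cast
      calc X = (X / d) * d := by field_simp
        _ ≤ (e:ℝ) * d := mul_le_mul_of_nonneg_right h1 hd0.le
        _ = (d:ℝ) * e := by ring
    · rw [Nat.le_floor_iff (by positivity)]
      push_cast
      exact hde2X

lemma term_vanish {X : ℝ} (hX : 1 ≤ X) {d : ℕ} (hd : d ∉ Finset.Icc 1 ⌊2 * X⌋₊) :
    term X d = 0 := by
  rw [Finset.mem_Icc] at hd
  push_neg at hd
  rcases Nat.eq_zero_or_pos d with rfl | hd1
  · unfold term
    rw [gg.map_zero]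
    ring
  have hB : ⌊2*X⌋₊ < d := hd hd1
  have hX0 : (0:ℝ) < X := by linarith
  have h2Xd : 2 * X < d := (Nat.floor_lt (by positivity)).mp hB
  have hflr : ⌊2 * X / d⌋₊ = 0 := by
    rw [Nat.floor_eq_zero]
    rw [div_lt_one (by exact_mod_cast hd1)]
    linarith
  have hceil : 1 ≤ ⌈X / d⌉₊ := Nat.one_le_ceil_iff.mpr (by
    apply div_pos hX0
    exact_mod_cast hd1)
  unfold term WW
  rw [hflr, Finset.Icc_eq_empty (by omega), Finset.sum_empty]
  ring

lemma tsum_term {X : ℝ} (hX : 1 ≤ X) :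
    (∑ N ∈ (Finset.Icc ⌈X⌉₊ ⌊2 * X⌋₊).filter (fun N => Squarefree N),
          (2 : ℝ) ^ N.primeFactors.card) / (X * Real.log X) = ∑' d, term X d := by
  classical
  have hceil1 : 1 ≤ ⌈X⌉₊ := Nat.one_le_ceil_iff.mpr (by linarith)
  have h1 : ∑ N ∈ (Finset.Icc ⌈X⌉₊ ⌊2 * X⌋₊).filter (fun N => Squarefree N),
      (2 : ℝ) ^ N.primeFactors.card = ∑ N ∈ Finset.Icc ⌈X⌉₊ ⌊2 * X⌋₊, FF N := by
    rw [Finset.sum_filter]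
    exact Finset.sum_congr rfl fun N _ => rfl
  have h2 : ∀ N : ℕ, FF N = ∑ x ∈ N.divisorsAntidiagonal,
      gg x.1 * ((σ 0 : ArithmeticFunction ℕ) : ArithmeticFunction ℝ) x.2 := by
    intro N
    rw [key_identity]
    rfl
  rw [h1, Finset.sum_congr rfl (fun N _ => h2 N),
    swap_lemma _ _ hceil1 (fun d => gg d)
      (fun e => ((σ 0 : ArithmeticFunction ℕ) : ArithmeticFunction ℝ) e)]
  have h3 : ∀ d ∈ Finset.Icc 1 ⌊2 * X⌋₊,
      gg d * ∑ e ∈ (Finset.Icc 1 ⌊2 * X⌋₊).filter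
          (fun e => ⌈X⌉₊ ≤ d * e ∧ d * e ≤ ⌊2 * X⌋₊),
          ((σ 0 : ArithmeticFunction ℕ) : ArithmeticFunction ℝ) e
        = gg d * WW d X := by
    intro d hd
    rw [Finset.mem_Icc] at hd
    rw [filter_eq_Icc hX hd.1]
    rfl
  rw [Finset.sum_congr rfl h3, Finset.sum_div,
    tsum_eq_sum (f := fun d => term X d) (s := Finset.Icc 1 ⌊2 * X⌋₊)
      (fun d hd => term_vanish hX hd)]
  rfl


/-! ### Euler product -/

noncomputable def ff : ℕ → ℝ := fun n => gg n / n

lemma ff_summable : Summable (fun n => ‖ff n‖) := by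
  apply gg_div_summable.congr
  intro n
  rw [Real.norm_eq_abs, ff, abs_div, Nat.abs_cast]

lemma ff_one : ff 1 = 1 := by
  unfold ff
  rw [gg_mult.1]
  norm_num

lemma ff_mul {m n : ℕ} (hmn : m.Coprime n) : ff (m * n) = ff m * ff n := by
  unfold ff
  rw [gg_mult.2 hmn]
  push_cast
  rw [div_mul_div_comm]

lemma ff_zero : ff 0 = 0 := by
  unfold ff
  rw [gg.map_zero]
  norm_num

lemma local_factor (p : Nat.Primes) :
    (∑' e : ℕ, ff ((p : ℕ) ^ e)) = 1 - 3 * ((p:ℕ):ℝ) ^ (-2 : ℤ) + 2 * ((p:ℕ):ℝ) ^ (-3 : ℤ) := by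
  have hp : (p : ℕ).Prime := p.2
  have hp0 : (0:ℝ) < ((p:ℕ):ℝ) := by exact_mod_cast hp.pos
  have hval : ∀ e : ℕ, ff ((p:ℕ) ^ e) = cc e / ((p:ℕ):ℝ) ^ e := by
    intro e
    unfold ff
    rw [gg_pow_eq_cc hp]
    push_cast
    rfl
  rw [tsum_eq_sum (s := ({0, 2, 3} : Finset ℕ)) (fun e he => by
    simp only [Finset.mem_insert, Finset.mem_singleton, not_or] at he
    rw [hval e]
    simp [cc, he.1, he.2.1, he.2.2])]
  rw [Finset.sum_insert (by decide), Finset.sum_insert (by decide), Finset.sum_singleton,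
    hval 0, hval 2, hval 3]
  simp only [cc, zpow_neg]
  norm_num
  ring

lemma euler_hasProd :
    HasProd (fun p : Nat.Primes =>
        1 - 3 * ((p:ℕ):ℝ) ^ (-2 : ℤ) + 2 * ((p:ℕ):ℝ) ^ (-3 : ℤ)) (∑' n, ff n) := by
  have h := EulerProduct.eulerProduct_hasProd ff_one (fun {m n} h => ff_mul h)
    ff_summable ff_zero
  rwa [show (fun p : Nat.Primes => ∑' e : ℕ, ff ((p : ℕ) ^ e))
    = (fun p : Nat.Primes => 1 - 3 * ((p:ℕ):ℝ) ^ (-2 : ℤ) + 2 * ((p:ℕ):ℝ) ^ (-3 : ℤ))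
    from funext local_factor] at h

/-! ### Positivity -/

noncomputable def aa : Nat.Primes → ℝ := fun p =>
  3 * ((p:ℕ):ℝ) ^ (-2 : ℤ) - 2 * ((p:ℕ):ℝ) ^ (-3 : ℤ)

lemma aa_eq (p : Nat.Primes) : aa p = (3 * ((p:ℕ):ℝ) - 2) / ((p:ℕ):ℝ) ^ 3 := by
  have hp0 : (0:ℝ) < ((p:ℕ):ℝ) := by exact_mod_cast p.2.pos
  unfold aa
  rw [zpow_neg, zpow_neg, zpow_two,
    show ((3:ℤ) = ((3:ℕ):ℤ)) by norm_num, zpow_natCast]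
  field_simp

lemma p_ge_two (p : Nat.Primes) : (2:ℝ) ≤ ((p:ℕ):ℝ) := by exact_mod_cast p.2.two_le

lemma aa_nonneg (p : Nat.Primes) : 0 ≤ aa p := by
  rw [aa_eq]
  have := p_ge_two p
  apply div_nonneg (by linarith) (by positivity)

lemma aa_le_one (p : Nat.Primes) : aa p ≤ 1 := by
  rw [aa_eq]
  have h2 := p_ge_two p
  have hp0 : (0:ℝ) < ((p:ℕ):ℝ) := by linarith
  rw [div_le_one (by positivity)]
  nlinarith [mul_nonneg (sub_nonneg.mpr h2) (sq_nonneg ((p:ℕ):ℝ)),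
    mul_nonneg (sub_nonneg.mpr h2) hp0.le]

lemma factor_eq_one_sub (p : Nat.Primes) :
    1 - 3 * ((p:ℕ):ℝ) ^ (-2 : ℤ) + 2 * ((p:ℕ):ℝ) ^ (-3 : ℤ) = 1 - aa p := by
  unfold aa
  ring

lemma weier {ι : Type*} [DecidableEq ι] (s : Finset ι) (a : ι → ℝ)
    (h0 : ∀ i, 0 ≤ a i) (h1 : ∀ i, a i ≤ 1) :
    1 - ∑ i ∈ s, a i ≤ ∏ i ∈ s, (1 - a i) := by
  induction s using Finset.induction_on with
  | empty => simp
  | @insert j t hj ih =>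
    rw [Finset.sum_insert hj, Finset.prod_insert hj]
    have hs : 0 ≤ ∑ i ∈ t, a i := Finset.sum_nonneg fun i _ => h0 i
    have h1j : 0 ≤ 1 - a j := by linarith [h1 j]
    have key := mul_le_mul_of_nonneg_left ih h1j
    nlinarith [h0 j]

def two' : Nat.Primes := ⟨2, Nat.prime_two⟩

lemma sum_aa_le (s : Finset Nat.Primes) :
    ∑ p ∈ s.erase two', aa p ≤ 27/32 := by
  classical
  set t := s.erase two' with ht
  set κ : Nat.Primes → ℕ := fun p => ((p:ℕ) - 3) / 2 with hκ
  have hodd : ∀ p ∈ t, (p:ℕ) = 2 * κ p + 3 := by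
    intro p hp
    have hne : p ≠ two' := Finset.ne_of_mem_erase hp
    have hne2 : (p:ℕ) ≠ 2 := fun h => hne (Subtype.ext h)
    obtain ⟨m, hm⟩ := p.2.odd_of_ne_two hne2
    have h2 : 2 ≤ (p:ℕ) := p.2.two_le
    simp only [hκ]
    omega
  have hbound : ∀ p ∈ t, aa p ≤ (27/32) * (1/((κ p : ℝ) + 1) - 1/((κ p : ℝ) + 2)) := by
    intro p hp
    have hpe := hodd p hp
    have hpr : ((p:ℕ):ℝ) = 2 * (κ p : ℝ) + 3 := by exact_mod_cast congrArg (Nat.cast (R := ℝ)) hpe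
    rw [aa_eq, hpr]
    have hj0 : (0:ℝ) ≤ (κ p : ℝ) := Nat.cast_nonneg _
    have h1 : (1:ℝ)/((κ p : ℝ)+1) - 1/((κ p : ℝ)+2)
        = 1/(((κ p : ℝ)+1) * ((κ p : ℝ)+2)) := by
      field_simp
      norm_num
    rw [h1]
    have h2 : (27:ℝ)/32 * (1/(((κ p : ℝ)+1) * ((κ p : ℝ)+2)))
        = 27/(32 * (((κ p : ℝ)+1) * ((κ p : ℝ)+2))) := by
      field_simp
    rw [h2, div_le_div_iff₀ (by positivity) (by positivity)]
    nlinarith [hj0, mul_nonneg hj0 hj0, mul_nonneg (mul_nonneg hj0 hj0) hj0]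
  obtain ⟨M, hM⟩ := Finset.exists_nat_subset_range (t.image κ)
  have hinj : ∀ x ∈ t, ∀ y ∈ t, κ x = κ y → x = y := by
    intro x hx y hy hxy
    apply Subtype.ext
    rw [hodd x hx, hodd y hy, hxy]
  have hterm_nonneg : ∀ j : ℕ, 0 ≤ (27/32 : ℝ) * (1/((j:ℝ)+1) - 1/((j:ℝ)+2)) := by
    intro j
    have : (1:ℝ)/((j:ℝ)+2) ≤ 1/((j:ℝ)+1) :=
      one_div_le_one_div_of_le (by positivity) (by linarith)
    nlinarith
  calc ∑ p ∈ t, aa p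
      ≤ ∑ p ∈ t, (27/32) * (1/((κ p : ℝ) + 1) - 1/((κ p : ℝ) + 2)) :=
        Finset.sum_le_sum hbound
    _ = ∑ j ∈ t.image κ, (27/32) * (1/((j:ℝ) + 1) - 1/((j:ℝ) + 2)) := by
        rw [Finset.sum_image hinj]
    _ ≤ ∑ j ∈ Finset.range M, (27/32) * (1/((j:ℝ) + 1) - 1/((j:ℝ) + 2)) :=
        Finset.sum_le_sum_of_subset_of_nonneg hM (fun j _ _ => hterm_nonneg j)
    _ = (27/32) * ∑ j ∈ Finset.range M, (1/((j:ℝ) + 1) - 1/((j:ℝ) + 2)) := by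
        rw [Finset.mul_sum]
    _ = (27/32) * (1 - 1/((M:ℝ) + 1)) := by
        congr 1
        have htel := Finset.sum_range_sub' (f := fun j : ℕ => 1/((j:ℝ) + 1)) (n := M)
        have heq : ∀ j ∈ Finset.range M, 1/((j:ℝ)+1) - 1/((j:ℝ)+2)
            = (fun j : ℕ => 1/((j:ℝ)+1)) j - (fun j : ℕ => 1/((j:ℝ)+1)) (j+1) := by
          intro j _
          push_cast
          ring
        rw [Finset.sum_congr rfl heq, htel]
        norm_num
    _ ≤ 27/32 := by
        have h0 : (0:ℝ) ≤ 1/((M:ℝ)+1) := by positivity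
        nlinarith

lemma C_positive : 0 < ∑' n, ff n := by
  apply lt_of_lt_of_le (show (0:ℝ) < 5/64 by norm_num)
  apply ge_of_tendsto euler_hasProd
  filter_upwards [eventually_ge_atTop ({two'} : Finset Nat.Primes)] with s hs
  classical
  have htwo : two' ∈ s := hs (Finset.mem_singleton_self _)
  rw [← Finset.mul_prod_erase s _ htwo]
  have hF2 : (1:ℝ) - 3 * (((two' : Nat.Primes) : ℕ):ℝ) ^ (-2 : ℤ)
      + 2 * (((two' : Nat.Primes) : ℕ):ℝ) ^ (-3 : ℤ) = 1/2 := by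
    show (1:ℝ) - 3 * ((2:ℕ):ℝ) ^ (-2 : ℤ) + 2 * ((2:ℕ):ℝ) ^ (-3 : ℤ) = 1/2
    norm_num
  rw [hF2]
  have hprod : ∏ p ∈ s.erase two',
      (1 - 3 * ((p:ℕ):ℝ) ^ (-2 : ℤ) + 2 * ((p:ℕ):ℝ) ^ (-3 : ℤ))
      = ∏ p ∈ s.erase two', (1 - aa p) :=
    Finset.prod_congr rfl fun p _ => factor_eq_one_sub p
  rw [hprod]
  have hW := weier (s.erase two') aa aa_nonneg aa_le_one
  have hS := sum_aa_le s
  nlinarith [hW, hS]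

end Aux

theorem stmt_14 (C : ℝ)
    (hC : C = ∏' p : Nat.Primes,
      (1 - 3 * ((p : ℕ) : ℝ) ^ (-2 : ℤ) + 2 * ((p : ℕ) : ℝ) ^ (-3 : ℤ))) :
    0 < C ∧
    Tendsto (fun X : ℝ =>
        (∑ N ∈ (Finset.Icc ⌈X⌉₊ ⌊2 * X⌋₊).filter (fun N => Squarefree N),
          (2 : ℝ) ^ N.primeFactors.card) / (X * Real.log X))
      atTop (nhds C) := by
  have hCf : C = ∑' n, ff n := by
    rw [hC, ← euler_hasProd.tprod_eq]
  constructor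
  · rw [hCf]; exact C_positive
  · have hbsum : Summable (fun d : ℕ => 6 * (|gg d| / d)) := gg_div_summable.mul_left 6
    have hnb : ∀ᶠ X in Filter.atTop, ∀ d : ℕ, ‖term X d‖ ≤ 6 * (|gg d| / d) := by
      filter_upwards [term_bound] with X h d
      rw [Real.norm_eq_abs]
      exact h d
    have hT := tendsto_tsum_of_dominated_convergence (𝓕 := atTop)
      (f := fun X d => term X d) (g := fun d : ℕ => gg d / d) hbsum term_tendsto hnb
    have hlim : (∑' d : ℕ, gg d / (d:ℝ)) = C := by rw [hCf]; rfl
    rw [hlim] at hT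
    apply hT.congr'
    filter_upwards [eventually_ge_atTop 1] with X hX
    exact (tsum_term hX).symm
end

section
/- There exist positive real constants C_1 and C_2 such that for every real X ≥ 1, the two-dimensional Lebesgue measure of the region R_X = {(a_4, a_6) in R^2 : |64·a_4^3 + 432·a_6^2| ≤ X} satisfies C_1 · X^{5/6} ≤ area(R_X) ≤ C_2 · X^{5/6}. That is, the area of R_X has order of magnitude X^{5/6}. -/
open MeasureTheory Set Real

set_option maxHeartbeats 1000000 in
private lemma stmt19_section_bound {X : ℝ} (hX : 1 ≤ X) (a : ℝ) :
    volume {b : ℝ | |64 * a ^ 3 + 432 * b ^ 2| ≤ X} ≤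
      (Icc (-(X ^ ((1:ℝ)/3))) (X ^ ((1:ℝ)/3))).indicator
        (fun _ => ENNReal.ofReal (Real.sqrt X)) a +
      (Iio (-(X ^ ((1:ℝ)/3)))).indicator
        (fun a => ENNReal.ofReal (X / 36 * (-a) ^ (-(3:ℝ)/2))) a := by
  have hX0 : (0:ℝ) < X := by linarith
  obtain ⟨R, hRdef⟩ : ∃ R : ℝ, R = X ^ ((1:ℝ)/3) := ⟨_, rfl⟩
  rw [← hRdef]
  have hR1 : (1:ℝ) ≤ R := hRdef ▸ Real.one_le_rpow hX (by norm_num)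
  have hR0 : (0:ℝ) < R := by linarith
  have hR3 : R ^ 3 = X := by
    rw [hRdef, ← Real.rpow_natCast (X ^ ((1:ℝ)/3)) 3, ← Real.rpow_mul hX0.le]
    norm_num
  rcases lt_or_ge a (-R) with hc | hc
  · -- tail case a < -R
    rw [Set.indicator_of_notMem (by simp only [mem_Icc, not_and_or, not_le]; left; linarith),
      Set.indicator_of_mem (mem_Iio.mpr hc), zero_add]
    obtain ⟨t, htdef⟩ : ∃ t : ℝ, t = -a := ⟨_, rfl⟩
    have ht1 : R < t := by rw [htdef]; linarith
    have ht0 : (0:ℝ) < t := by linarith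
    have htX : X ≤ t ^ 3 := by
      rw [← hR3]; exact pow_le_pow_left₀ (by linarith) ht1.le 3
    obtain ⟨s, hsdef⟩ : ∃ s : ℝ, s = t ^ ((3:ℝ)/2) := ⟨_, rfl⟩
    have hs0 : (0:ℝ) < s := hsdef ▸ Real.rpow_pos_of_pos ht0 _
    have hs2 : s ^ 2 = t ^ 3 := by
      rw [hsdef, ← Real.rpow_natCast (t ^ ((3:ℝ)/2)) 2, ← Real.rpow_mul ht0.le,
        ← Real.rpow_natCast t 3]
      norm_num
    obtain ⟨l, hldef⟩ : ∃ l : ℝ, l = (64 * t ^ 3 - X) / 432 := ⟨_, rfl⟩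
    obtain ⟨u, hudef⟩ : ∃ u : ℝ, u = (X + 64 * t ^ 3) / 432 := ⟨_, rfl⟩
    have hl8 : t ^ 3 / 8 ≤ l := by rw [hldef]; nlinarith [htX, hX0]
    have hl0 : (0:ℝ) ≤ l := by nlinarith
    have hul : l ≤ u := by rw [hldef, hudef]; nlinarith
    have hu0 : (0:ℝ) ≤ u := hl0.trans hul
    have hsl : s / 3 ≤ Real.sqrt l := by
      rw [show s / 3 = Real.sqrt ((s/3)^2) from (Real.sqrt_sq (by positivity)).symm]
      apply Real.sqrt_le_sqrt
      nlinarith [hs2, hl8, htX, hX0]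
    have hslu : Real.sqrt l ≤ Real.sqrt u := Real.sqrt_le_sqrt hul
    have hsub : {b : ℝ | |64 * a ^ 3 + 432 * b ^ 2| ≤ X}
        ⊆ Icc (-(Real.sqrt u)) (-(Real.sqrt l)) ∪ Icc (Real.sqrt l) (Real.sqrt u) := by
      intro b hb
      simp only [mem_setOf_eq] at hb
      obtain ⟨hb1, hb2⟩ := abs_le.mp hb
      have ha3 : a ^ 3 = -t ^ 3 := by rw [htdef]; ring
      rw [ha3] at hb1 hb2
      have hbl : l ≤ b ^ 2 := by rw [hldef]; nlinarith
      have hbu : b ^ 2 ≤ u := by rw [hudef]; nlinarith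
      have h1 : Real.sqrt l ≤ |b| := by
        rw [← Real.sqrt_sq_eq_abs]; exact Real.sqrt_le_sqrt hbl
      have h2 : |b| ≤ Real.sqrt u := by
        rw [← Real.sqrt_sq_eq_abs]; exact Real.sqrt_le_sqrt hbu
      rcases le_or_gt 0 b with hbs | hbs
      · right; rw [abs_of_nonneg hbs] at h1 h2; exact ⟨h1, h2⟩
      · left; rw [abs_of_neg hbs] at h1 h2; constructor <;> linarith
    have hwidth : Real.sqrt u - Real.sqrt l + (Real.sqrt u - Real.sqrt l)
        ≤ X / 36 * t ^ (-(3:ℝ)/2) := by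
      have hprod : (Real.sqrt u - Real.sqrt l) * (Real.sqrt u + Real.sqrt l) = X / 216 := by
        have e1 : Real.sqrt u ^ 2 = u := Real.sq_sqrt hu0
        have e2 : Real.sqrt l ^ 2 = l := Real.sq_sqrt hl0
        have : u - l = X / 216 := by rw [hldef, hudef]; ring
        nlinarith
      have hds : (Real.sqrt u - Real.sqrt l) * s ≤ X / 72 := by
        nlinarith [Real.sqrt_nonneg l]
      have hinv : t ^ (-(3:ℝ)/2) = s⁻¹ := by
        rw [hsdef, ← Real.rpow_neg ht0.le]; norm_num
      rw [hinv, show X / 36 * s⁻¹ = (X / 36) / s from by ring, le_div_iff₀ hs0]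
      linarith
    calc volume {b : ℝ | |64 * a ^ 3 + 432 * b ^ 2| ≤ X}
        ≤ volume (Icc (-(Real.sqrt u)) (-(Real.sqrt l)) ∪ Icc (Real.sqrt l) (Real.sqrt u)) :=
          measure_mono hsub
      _ ≤ volume (Icc (-(Real.sqrt u)) (-(Real.sqrt l)))
          + volume (Icc (Real.sqrt l) (Real.sqrt u)) := measure_union_le _ _
      _ = ENNReal.ofReal (Real.sqrt u - Real.sqrt l)
          + ENNReal.ofReal (Real.sqrt u - Real.sqrt l) := by
          rw [Real.volume_Icc, Real.volume_Icc]; ring_nf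
      _ ≤ ENNReal.ofReal (X / 36 * t ^ (-(3:ℝ)/2)) := by
          rw [← ENNReal.ofReal_add (by linarith) (by linarith)]
          exact ENNReal.ofReal_le_ofReal hwidth
      _ = ENNReal.ofReal (X / 36 * (-a) ^ (-(3:ℝ)/2)) := by rw [← htdef]
  · rcases le_or_gt a R with hc2 | hc2
    · -- middle case
      rw [Set.indicator_of_mem (mem_Icc.mpr ⟨hc, hc2⟩),
        Set.indicator_of_notMem (by simp only [mem_Iio, not_lt]; linarith)]
      rw [add_zero]
      have hsub : {b : ℝ | |64 * a ^ 3 + 432 * b ^ 2| ≤ X}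
          ⊆ Icc (-(Real.sqrt X / 2)) (Real.sqrt X / 2) := by
        intro b hb
        simp only [mem_setOf_eq] at hb
        obtain ⟨hb1, hb2⟩ := abs_le.mp hb
        have ha3 : -X ≤ a ^ 3 := by
          nlinarith [mul_nonneg (by linarith : (0:ℝ) ≤ a + R)
            (by nlinarith [sq_nonneg (a - R)] : (0:ℝ) ≤ a ^ 2 - a * R + R ^ 2)]
        have hbsq : b ^ 2 ≤ X / 4 := by nlinarith
        have hs := Real.sq_sqrt hX0.le
        have hsn := Real.sqrt_nonneg X
        constructor
        · nlinarith [sq_nonneg (b + Real.sqrt X / 2)]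
        · nlinarith [sq_nonneg (b - Real.sqrt X / 2)]
      calc volume {b : ℝ | |64 * a ^ 3 + 432 * b ^ 2| ≤ X}
          ≤ volume (Icc (-(Real.sqrt X / 2)) (Real.sqrt X / 2)) := measure_mono hsub
        _ = ENNReal.ofReal (Real.sqrt X) := by rw [Real.volume_Icc]; ring_nf
    · -- empty case
      have hempty : {b : ℝ | |64 * a ^ 3 + 432 * b ^ 2| ≤ X} = ∅ := by
        rw [eq_empty_iff_forall_notMem]
        intro b hb
        simp only [mem_setOf_eq] at hb
        have hX' : X < a ^ 3 := by
          rw [← hR3]; exact pow_lt_pow_left₀ hc2 hR0.le (by norm_num)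
        have := (abs_le.mp hb).2
        nlinarith [sq_nonneg b]
      rw [hempty, measure_empty]
      exact zero_le

set_option maxHeartbeats 1000000 in
theorem stmt_19 :
    ∃ C₁ C₂ : ℝ, 0 < C₁ ∧ 0 < C₂ ∧ ∀ X : ℝ, 1 ≤ X →
      C₁ * X ^ ((5 : ℝ) / 6) ≤
        (volume {x : ℝ × ℝ | |64 * x.1 ^ 3 + 432 * x.2 ^ 2| ≤ X}).toReal ∧
      (volume {x : ℝ × ℝ | |64 * x.1 ^ 3 + 432 * x.2 ^ 2| ≤ X}).toReal ≤
        C₂ * X ^ ((5 : ℝ) / 6) := by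
  refine ⟨(1/128 : ℝ) ^ ((1:ℝ)/3) * (1/864 : ℝ) ^ ((1:ℝ)/2), 3, by positivity, by norm_num,
    fun X hX => ?_⟩
  have hX0 : (0:ℝ) < X := by linarith
  have hSm : MeasurableSet {x : ℝ × ℝ | |64 * x.1 ^ 3 + 432 * x.2 ^ 2| ≤ X} := by
    apply measurableSet_le _ measurable_const
    fun_prop
  obtain ⟨R, hRdef⟩ : ∃ R : ℝ, R = X ^ ((1:ℝ)/3) := ⟨_, rfl⟩
  have hR1 : (1:ℝ) ≤ R := hRdef ▸ Real.one_le_rpow hX (by norm_num)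
  have hR0 : (0:ℝ) < R := by linarith
  -- upper bound on the measure
  have hub : volume {x : ℝ × ℝ | |64 * x.1 ^ 3 + 432 * x.2 ^ 2| ≤ X}
      ≤ ENNReal.ofReal (3 * X ^ ((5:ℝ)/6)) := by
    rw [Measure.volume_eq_prod, Measure.prod_apply hSm]
    have step1 : ∫⁻ a : ℝ,
        volume (Prod.mk a ⁻¹' {x : ℝ × ℝ | |64 * x.1 ^ 3 + 432 * x.2 ^ 2| ≤ X})
        ≤ ∫⁻ a : ℝ, ((Icc (-(X ^ ((1:ℝ)/3))) (X ^ ((1:ℝ)/3))).indicator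
            (fun _ => ENNReal.ofReal (Real.sqrt X)) a +
          (Iio (-(X ^ ((1:ℝ)/3)))).indicator
            (fun a => ENNReal.ofReal (X / 36 * (-a) ^ (-(3:ℝ)/2))) a) :=
      lintegral_mono fun a => stmt19_section_bound hX a
    refine le_trans step1 ?_
    rw [← hRdef]
    rw [lintegral_add_left (measurable_const.indicator measurableSet_Icc)]
    have I1 : ∫⁻ a : ℝ, (Icc (-R) R).indicator
        (fun _ => ENNReal.ofReal (Real.sqrt X)) a
        = ENNReal.ofReal (Real.sqrt X * (2 * R)) := by
      rw [lintegral_indicator_const measurableSet_Icc, Real.volume_Icc,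
        ← ENNReal.ofReal_mul (Real.sqrt_nonneg X)]
      congr 1; ring
    have I2 : ∫⁻ a : ℝ, (Iio (-R)).indicator
        (fun a => ENNReal.ofReal (X / 36 * (-a) ^ (-(3:ℝ)/2))) a
        = ENNReal.ofReal (X / 36 * (2 * R ^ (-(1:ℝ)/2))) := by
      rw [lintegral_indicator measurableSet_Iio]
      have hmp : MeasurePreserving (fun x : ℝ => -x)
          (volume : Measure ℝ) (volume : Measure ℝ) := Measure.measurePreserving_neg _
      have hemb : MeasurableEmbedding (fun x : ℝ => -x) :=
        (Homeomorph.neg ℝ).measurableEmbedding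
      have hchg := hmp.setLIntegral_comp_emb hemb
        (fun y => ENNReal.ofReal (X / 36 * (-y) ^ (-(3:ℝ)/2))) (Ioi R)
      rw [show ((fun x : ℝ => -x) '' Ioi R) = Iio (-R) from by simpa using Set.image_neg_Ioi (a := R)] at hchg
      rw [← hchg]
      have hchg2 : ∀ t : ℝ, ENNReal.ofReal (X / 36 * (-(-t)) ^ (-(3:ℝ)/2))
          = ENNReal.ofReal (X / 36 * t ^ (-(3:ℝ)/2)) := fun t => by rw [neg_neg]
      simp only [hchg2]
      have hint : IntegrableOn (fun t : ℝ => X / 36 * t ^ (-(3:ℝ)/2)) (Ioi R) volume := by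
        have := integrableOn_Ioi_rpow_of_lt (show (-(3:ℝ)/2) < -1 by norm_num) hR0
        exact this.const_mul _
      have hnn : 0 ≤ᵐ[volume.restrict (Ioi R)] fun t : ℝ => X / 36 * t ^ (-(3:ℝ)/2) := by
        refine Filter.eventually_of_mem (self_mem_ae_restrict measurableSet_Ioi) ?_
        intro t ht
        exact mul_nonneg (by positivity)
          (Real.rpow_nonneg (le_of_lt (lt_trans hR0 ht)) _)
      rw [← ofReal_integral_eq_lintegral_ofReal hint hnn]
      congr 1
      rw [MeasureTheory.integral_const_mul, integral_Ioi_rpow_of_lt (by norm_num) hR0]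
      rw [show (-(3:ℝ)/2 + 1) = -(1:ℝ)/2 from by norm_num]
      ring
    rw [I1, I2, ← ENNReal.ofReal_add (by positivity)
      (mul_nonneg (by positivity) (by positivity))]
    apply ENNReal.ofReal_le_ofReal
    have e1 : Real.sqrt X * (2 * R) = 2 * X ^ ((5:ℝ)/6) := by
      rw [Real.sqrt_eq_rpow, hRdef, show ((5:ℝ)/6) = 1/(2:ℝ) + 1/3 from by norm_num,
        Real.rpow_add hX0]
      ring
    have e2 : X / 36 * (2 * R ^ (-(1:ℝ)/2)) = 1/18 * X ^ ((5:ℝ)/6) := by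
      rw [hRdef, ← Real.rpow_mul hX0.le,
        show ((1:ℝ)/3 * (-(1:ℝ)/2)) = -(1:ℝ)/6 from by norm_num]
      have e3 : X * X ^ (-(1:ℝ)/6) = X ^ ((5:ℝ)/6) := by
        nth_rewrite 1 [← Real.rpow_one X]
        rw [← Real.rpow_add hX0]; norm_num
      linear_combination (1/18) * e3
    rw [e1, e2]
    nlinarith [Real.rpow_nonneg hX0.le ((5:ℝ)/6)]
  -- lower bound on the measure
  obtain ⟨P, hPdef⟩ : ∃ P : ℝ, P = (X/128) ^ ((1:ℝ)/3) := ⟨_, rfl⟩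
  obtain ⟨Q, hQdef⟩ : ∃ Q : ℝ, Q = (X/864) ^ ((1:ℝ)/2) := ⟨_, rfl⟩
  have hP0 : (0:ℝ) ≤ P := hPdef ▸ Real.rpow_nonneg (by positivity) _
  have hQ0 : (0:ℝ) ≤ Q := hQdef ▸ Real.rpow_nonneg (by positivity) _
  have hP3 : P ^ 3 = X / 128 := by
    rw [hPdef, ← Real.rpow_natCast ((X/128) ^ ((1:ℝ)/3)) 3, ← Real.rpow_mul (by positivity)]
    norm_num
  have hQ2 : Q ^ 2 = X / 864 := by
    rw [hQdef, ← Real.rpow_natCast ((X/864) ^ ((1:ℝ)/2)) 2, ← Real.rpow_mul (by positivity)]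
    norm_num
  have hbox : Icc (-P) 0 ×ˢ Icc 0 Q ⊆ {x : ℝ × ℝ | |64 * x.1 ^ 3 + 432 * x.2 ^ 2| ≤ X} := by
    rintro ⟨a, b⟩ ⟨⟨ha1, ha2⟩, hb1, hb2⟩
    simp only [mem_setOf_eq]
    have ha3 : -(X/128) ≤ a ^ 3 := by
      rw [← hP3]
      nlinarith [mul_nonneg (by linarith : (0:ℝ) ≤ a + P)
        (by nlinarith [sq_nonneg (a - P)] : (0:ℝ) ≤ a ^ 2 - a * P + P ^ 2)]
    have ha3' : a ^ 3 ≤ 0 := by nlinarith [sq_nonneg a]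
    have hb2' : b ^ 2 ≤ X / 864 := by rw [← hQ2]; nlinarith
    rw [abs_le]
    constructor <;> nlinarith [sq_nonneg b]
  have hlb : ENNReal.ofReal (P * Q)
      ≤ volume {x : ℝ × ℝ | |64 * x.1 ^ 3 + 432 * x.2 ^ 2| ≤ X} := by
    refine le_trans (le_of_eq ?_) (measure_mono hbox)
    rw [Measure.volume_eq_prod, Measure.prod_prod, Real.volume_Icc, Real.volume_Icc,
      ← ENNReal.ofReal_mul (by linarith)]
    congr 1; ring
  have hPQ : (1/128 : ℝ) ^ ((1:ℝ)/3) * (1/864 : ℝ) ^ ((1:ℝ)/2) * X ^ ((5:ℝ)/6) = P * Q := by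
    rw [hPdef, hQdef, show (X/128 : ℝ) = X * (1/128) from by ring,
      show (X/864 : ℝ) = X * (1/864) from by ring,
      Real.mul_rpow hX0.le (by norm_num), Real.mul_rpow hX0.le (by norm_num),
      show ((5:ℝ)/6) = 1/(3:ℝ) + 1/2 from by norm_num, Real.rpow_add hX0]
    ring
  have hne : volume {x : ℝ × ℝ | |64 * x.1 ^ 3 + 432 * x.2 ^ 2| ≤ X} ≠ ⊤ :=
    (lt_of_le_of_lt hub ENNReal.ofReal_lt_top).ne
  constructor
  · rw [hPQ]
    calc P * Q = (ENNReal.ofReal (P * Q)).toReal :=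
          (ENNReal.toReal_ofReal (mul_nonneg hP0 hQ0)).symm
      _ ≤ _ := ENNReal.toReal_mono hne hlb
  · calc (volume {x : ℝ × ℝ | |64 * x.1 ^ 3 + 432 * x.2 ^ 2| ≤ X}).toReal
        ≤ (ENNReal.ofReal (3 * X ^ ((5:ℝ)/6))).toReal :=
          ENNReal.toReal_mono ENNReal.ofReal_ne_top hub
      _ = 3 * X ^ ((5:ℝ)/6) := ENNReal.toReal_ofReal (by positivity)
end
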